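/- Under the hypotheses I(D) ∩ D = ∅, D_ξ open, φ_ξ(D_ξ) ⊆ X_ξ, the function τ* defined by τ*(x) = τ_1(x) for x ∉ D and τ*(x) = 0 for x ∈ D is continuous on X_ξ ∪ D. -/
import Mathlib


open Set Filter
open scoped ENNReal NNReal Classical Real

variable {α : Type*}

/-- First impulse time `τ₁(x) = inf { t > 0 : φ_t(x) ∈ D }` (`∞` if the orbit never meets `D`). -/
noncomputable def tau1 [MetricSpace α] (φ : ℝ → α → α) (D : Set α) (x : α) : ℝ≥0∞ :=
  sInf (ENNReal.ofReal '' {t : ℝ | 0 < t ∧ φ t x ∈ D})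

/-- The successive impulse points `x⁰ = x`, `x¹ = φ_{τ₁(x)}(x)`,
`x^{n+1} = φ_{τ₁(I(xⁿ))}(I(xⁿ))`. -/
noncomputable def impSeq [MetricSpace α] (φ : ℝ → α → α) (D : Set α) (I : α → α) (x : α) :
    ℕ → α
  | 0 => x
  | n + 1 =>
      let y := if n = 0 then x else I (impSeq φ D I x n)
      φ (tau1 φ D y).toReal y

/-- The successive impulse times `τ_0 = 0`, `τ_{n+1}(x) = τ_n(x) + τ₁(I(xⁿ))`
(with `τ_1(x) = τ₁(x)`). -/
noncomputable def impTime [MetricSpace α] (φ : ℝ → α → α) (D : Set α) (I : α → α) (x : α) :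
    ℕ → ℝ≥0∞
  | 0 => 0
  | n + 1 => impTime φ D I x n + tau1 φ D (if n = 0 then x else I (impSeq φ D I x n))

/-- `(X,φ,D,I)` is an impulsive dynamical system: `φ` is a continuous semiflow, `D` a proper
closed subset, `I` continuous on `D`, every first impulse time is positive, and the total
impulse time is infinite. -/
def IsIDS [MetricSpace α] (φ : ℝ → α → α) (D : Set α) (I : α → α) : Prop :=
  ((∀ x, φ 0 x = x) ∧ ∀ s t : ℝ, 0 ≤ s → 0 ≤ t → ∀ x, φ (s + t) x = φ s (φ t x)) ∧
  ContinuousOn (fun p : ℝ × α => φ p.1 p.2) (Set.Ici 0 ×ˢ Set.univ) ∧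
  IsClosed D ∧ D ≠ Set.univ ∧ ContinuousOn I D ∧
  (∀ x, 0 < tau1 φ D x) ∧ (∀ x, (⨆ n, impTime φ D I x n) = ⊤)

/-- The tube `D_η = ⋃_{x ∈ D} { φ_t(x) : 0 < t < η }`. -/
def tube (φ : ℝ → α → α) (D : Set α) (η : ℝ) : Set α :=
  ⋃ x ∈ D, (fun t => φ t x) '' Set.Ioo 0 η

/-- `X_η = X \ (D ∪ D_η)`. -/
def Xtube (φ : ℝ → α → α) (D : Set α) (η : ℝ) : Set α :=
  (D ∪ tube φ D η)ᶜ

/-- `ψ` is the impulsive semiflow associated to `(X,φ,D,I)`: it agrees with the impulsive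
drift `γ_x` on each interval between consecutive impulse times. -/
def IsImpulsive [MetricSpace α] (φ : ℝ → α → α) (D : Set α) (I : α → α)
    (ψ : ℝ → α → α) : Prop :=
  ∀ x : α,
    (∀ t : ℝ, 0 ≤ t → ENNReal.ofReal t < impTime φ D I x 1 → ψ t x = φ t x) ∧
    (∀ n : ℕ, 1 ≤ n → ∀ t : ℝ, impTime φ D I x n ≤ ENNReal.ofReal t →
      ENNReal.ofReal t < impTime φ D I x (n + 1) →
      ψ t x = φ (t - (impTime φ D I x n).toReal) (I (impSeq φ D I x n)))

/-- A regular impulsive dynamical system, with the constants `η, ξ` of the definition. -/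
def IsRegularIDS [MetricSpace α] (φ : ℝ → α → α) (D : Set α) (I : α → α) (η ξ : ℝ) : Prop :=
  IsIDS φ D I ∧ (I '' D) ∩ D = ∅ ∧ (∃ K : NNReal, LipschitzOnWith K I D) ∧
  0 < ξ ∧ ξ < η / 4 ∧ IsOpen (tube φ D ξ) ∧
  ((fun x => φ ξ x) '' tube φ D ξ ⊆ Xtube φ D ξ) ∧
  (∀ x ∈ I '' D, ∀ t : ℝ, 0 < t → t ≤ ξ → φ t x ∉ I '' D)

/-- `τ*`: equal to `τ₁` off `D` and to `0` on `D`. -/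
noncomputable def tauStar [MetricSpace α] (φ : ℝ → α → α) (D : Set α) (x : α) : ℝ≥0∞ :=
  if x ∈ D then 0 else tau1 φ D x

/-- The relation identifying `x` with `I x` for `x ∈ D`. -/
def IRel (D : Set α) (I : α → α) (x y : α) : Prop :=
  x = y ∨ (x ∈ D ∧ y = I x) ∨ (y ∈ D ∧ x = I y) ∨ (x ∈ D ∧ y ∈ D ∧ I x = I y)

/-- The chain pseudometric on the quotient by `IRel`:
`d̃(x̃,ỹ) = inf { Σ d(pᵢ,qᵢ) }` over chains `p₀ ∈ x̃`, `q_n ∈ ỹ`, `qᵢ ∼ p_{i+1}`. -/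
noncomputable def chainDist (d : α → α → ℝ) (D : Set α) (I : α → α) (x y : α) : ℝ :=
  sInf {r : ℝ | ∃ (n : ℕ) (p q : ℕ → α), IRel D I x (p 0) ∧ IRel D I (q n) y ∧
    (∀ i < n, IRel D I (q i) (p (i + 1))) ∧
    r = ∑ i ∈ Finset.range (n + 1), d (p i) (q i)}



section AuxStmt13

variable {X : Type*} [MetricSpace X] [CompactSpace X]
variable {φ : ℝ → X → X} {D : Set X} {ξ : ℝ}

/-- membership in the tube -/
lemma mem_tube_aux {d : X} (hd : d ∈ D) {s : ℝ} (h0 : 0 < s) (hsξ : s < ξ) :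
    φ s d ∈ tube φ D ξ :=
  mem_iUnion₂.mpr ⟨d, hd, ⟨s, ⟨h0, hsξ⟩, rfl⟩⟩

/-- continuity of `y ↦ φ t y` for positive `t` -/
lemma cont_space_aux (hcont : ContinuousOn (fun p : ℝ × X => φ p.1 p.2) (Set.Ici 0 ×ˢ Set.univ))
    {t : ℝ} (ht : 0 < t) : Continuous (fun y => φ t y) := by
  rw [continuous_iff_continuousAt]
  intro y
  have h1 : ContinuousAt (fun p : ℝ × X => φ p.1 p.2) (t, y) := by
    refine (hcont (t, y) ⟨ht.le, trivial⟩).continuousAt ?_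
    exact prod_mem_nhds (Ici_mem_nhds ht) univ_mem
  exact h1.comp ((continuous_const.prodMk continuous_id).continuousAt)

/-- continuity of the trajectory `r ↦ φ r y` on `[0,∞)` -/
lemma cont_traj_aux (hcont : ContinuousOn (fun p : ℝ × X => φ p.1 p.2) (Set.Ici 0 ×ˢ Set.univ))
    (y : X) : ContinuousOn (fun r : ℝ => φ r y) (Set.Ici 0) := by
  have : (fun r : ℝ => φ r y) = (fun p : ℝ × X => φ p.1 p.2) ∘ (fun r : ℝ => (r, y)) := rfl
  rw [this]
  exact hcont.comp ((continuous_id.prodMk continuous_const).continuousOn)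
    (fun r hr => ⟨hr, trivial⟩)

lemma cont_traj_at_aux (hcont : ContinuousOn (fun p : ℝ × X => φ p.1 p.2) (Set.Ici 0 ×ˢ Set.univ))
    (y : X) {u : ℝ} (hu : 0 < u) : ContinuousAt (fun r : ℝ => φ r y) u := by
  have h1 : ContinuousAt (fun p : ℝ × X => φ p.1 p.2) (u, y) := by
    refine (hcont (u, y) ⟨hu.le, trivial⟩).continuousAt ?_
    exact prod_mem_nhds (Ici_mem_nhds hu) univ_mem
  have h2 : ContinuousAt (fun r : ℝ => ((r, y) : ℝ × X)) u :=
    (continuous_id.prodMk continuous_const).continuousAt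
  have h3 := ContinuousAt.comp (f := fun r : ℝ => ((r, y) : ℝ × X)) (x := u) h1 h2
  exact h3

lemma tau1_le_aux {x : X} {t : ℝ} (ht : 0 < t) (h : φ t x ∈ D) :
    tau1 φ D x ≤ ENNReal.ofReal t :=
  sInf_le ⟨t, ⟨ht, h⟩, rfl⟩

lemma le_tau1_aux {x : X} {c : ℝ} (h : ∀ s, 0 < s → s ≤ c → φ s x ∉ D) :
    ENNReal.ofReal c ≤ tau1 φ D x := by
  refine le_sInf ?_
  rintro a ⟨s, ⟨hs0, hsD⟩, rfl⟩
  rcases le_or_gt s c with h1 | h1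
  · exact absurd hsD (h s hs0 h1)
  · exact ENNReal.ofReal_le_ofReal h1.le

/-- **Key lemma**: a point outside `D ∪ D_ξ` whose orbit enters the tube must first cross `D`. -/
lemma keyB_aux
    (hflow : (∀ x, φ 0 x = x) ∧ ∀ s t : ℝ, 0 ≤ s → 0 ≤ t → ∀ x, φ (s + t) x = φ s (φ t x))
    (hcont : ContinuousOn (fun p : ℝ × X => φ p.1 p.2) (Set.Ici 0 ×ˢ Set.univ))
    (hD : IsClosed D) (hξ : 0 < ξ) (hopen : IsOpen (tube φ D ξ))
    (hmap : (fun x => φ ξ x) '' tube φ D ξ ⊆ Xtube φ D ξ)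
    {y : X} (hyD : y ∉ D) (hyT : y ∉ tube φ D ξ) {t : ℝ} (ht : 0 ≤ t)
    (hφt : φ t y ∈ tube φ D ξ) : ∃ r, 0 < r ∧ r ≤ t ∧ φ r y ∈ D := by
  by_contra hcon
  push_neg at hcon
  set A : Set ℝ := {r | r ∈ Set.Icc 0 t ∧ φ r y ∈ tube φ D ξ} with hA
  have htA : t ∈ A := ⟨⟨ht, le_refl t⟩, hφt⟩
  have hAne : A.Nonempty := ⟨t, htA⟩
  have hAbdd : BddBelow A := ⟨0, fun r hr => hr.1.1⟩
  set u := sInf A with hu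
  have huIcc : u ∈ Set.Icc 0 t := ⟨le_csInf hAne (fun r hr => hr.1.1), csInf_le hAbdd htA⟩
  have hunD : φ u y ∉ D := by
    rcases eq_or_lt_of_le huIcc.1 with h | h
    · rw [← h, hflow.1]; exact hyD
    · exact hcon u h huIcc.2
  have huA : u ∉ A := by
    intro huA
    have hu0 : 0 < u := by
      rcases eq_or_lt_of_le huIcc.1 with h | h
      · exfalso; apply hyT
        have h2 := huA.2
        rw [← h, hflow.1] at h2; exact h2
      · exact h
    have hc : ContinuousAt (fun r : ℝ => φ r y) u := cont_traj_at_aux hcont y hu0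
    have hnb : (fun r : ℝ => φ r y) ⁻¹' tube φ D ξ ∈ nhds u :=
      hc.preimage_mem_nhds (hopen.mem_nhds huA.2)
    obtain ⟨δ, hδ0, hball⟩ := Metric.mem_nhds_iff.mp hnb
    set r := max (u - δ / 2) (u / 2) with hr
    have hru : r < u := max_lt (by linarith) (by linarith)
    have hr0 : 0 < r := lt_of_lt_of_le (by linarith) (le_max_right _ _)
    have hrball : r ∈ Metric.ball u δ := by
      rw [Metric.mem_ball, Real.dist_eq, abs_of_nonpos (by linarith)]
      have : u - δ / 2 ≤ r := le_max_left _ _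
      linarith
    have hrA : r ∈ A := ⟨⟨hr0.le, hru.le.trans huIcc.2⟩, hball hrball⟩
    exact absurd (csInf_le hAbdd hrA) (not_le.mpr hru)
  -- φ u y lies in the compact set φ([0,ξ] × D)
  set K : Set X := (fun p : ℝ × X => φ p.1 p.2) '' (Set.Icc 0 ξ ×ˢ D) with hKdef
  have hKc : IsCompact K :=
    (isCompact_Icc.prod (hD.isCompact)).image_of_continuousOn
      (hcont.mono (Set.prod_mono Set.Icc_subset_Ici_self (Set.subset_univ _)))
  have htubeK : tube φ D ξ ⊆ K := by
    rintro z hz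
    rw [tube] at hz
    simp only [Set.mem_iUnion] at hz
    obtain ⟨d, hd, s, hs, rfl⟩ := hz
    exact ⟨(s, d), ⟨⟨hs.1.le, hs.2.le⟩, hd⟩, rfl⟩
  have hclsK : closure (tube φ D ξ) ⊆ K := (hKc.isClosed.closure_subset_iff).mpr htubeK
  have huclA : u ∈ closure A := csInf_mem_closure hAne hAbdd
  have hclAIcc : closure A ⊆ Set.Icc 0 t :=
    (isClosed_Icc.closure_subset_iff).mpr (fun r hr => hr.1)
  have hfu : φ u y ∈ closure ((fun r : ℝ => φ r y) '' A) := by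
    have hcA : ContinuousOn (fun r : ℝ => φ r y) (closure A) :=
      (cont_traj_aux hcont y).mono (hclAIcc.trans (Set.Icc_subset_Ici_self))
    exact hcA.image_closure ⟨u, huclA, rfl⟩
  have himg : (fun r : ℝ => φ r y) '' A ⊆ tube φ D ξ := by
    rintro z ⟨r, hrA, rfl⟩; exact hrA.2
  have huK : φ u y ∈ K := hclsK (closure_mono himg hfu)
  obtain ⟨⟨s, d⟩, ⟨hsIcc, hdD⟩, hsd⟩ := huK
  simp only at hsd
  have hs0 : s ≠ 0 := by
    rintro rfl
    rw [hflow.1] at hsd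
    exact hunD (hsd ▸ hdD)
  have hspos : 0 < s := lt_of_le_of_ne hsIcc.1 (Ne.symm hs0)
  have hsξ : s = ξ := by
    by_contra hne
    have hlt : s < ξ := lt_of_le_of_ne hsIcc.2 hne
    have : φ u y ∈ tube φ D ξ := hsd ▸ mem_tube_aux hdD hspos hlt
    exact huA ⟨huIcc, this⟩
  -- pick r ∈ A with u < r < u + ξ
  have hex : ∃ r ∈ A, r < u + ξ :=
    (csInf_lt_iff hAbdd hAne).mp (by linarith : sInf A < u + ξ)
  obtain ⟨r, hrA, hrlt⟩ := hex
  have hur : u < r := lt_of_le_of_ne (csInf_le hAbdd hrA) (fun h => huA (h ▸ hrA))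
  set v := r - u with hv
  have hv0 : 0 < v := by simp [hv]; linarith
  have hvξ : v < ξ := by simp [hv]; linarith
  have hcomm : φ r y = φ ξ (φ v d) := by
    have h1 : φ r y = φ v (φ u y) := by
      rw [← hflow.2 v u hv0.le huIcc.1, (by ring : v + u = r)]
    rw [h1, ← hsd, hsξ]
    rw [← hflow.2 v ξ hv0.le hξ.le, (by ring : v + ξ = ξ + v), hflow.2 ξ v hξ.le hv0.le]
  have hXt : φ ξ (φ v d) ∈ Xtube φ D ξ :=
    hmap ⟨φ v d, mem_tube_aux hdD hv0 hvξ, rfl⟩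
  rw [← hcomm] at hXt
  exact hXt (Set.mem_union_right _ hrA.2)

/-- lower semicontinuity neighborhood: if the orbit of `x` avoids `D` up to time `c`, the same
holds on a neighborhood. -/
lemma lsc_nbhd_aux
    (hcont : ContinuousOn (fun p : ℝ × X => φ p.1 p.2) (Set.Ici 0 ×ˢ Set.univ))
    (hD : IsClosed D) {x : X} {c : ℝ}
    (h : ∀ s ∈ Set.Icc 0 c, φ s x ∉ D) :
    ∃ U, IsOpen U ∧ x ∈ U ∧ ∀ y ∈ U, ∀ s ∈ Set.Icc 0 c, φ s y ∉ D := by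
  obtain ⟨V, hVopen, hVeq⟩ := continuousOn_iff'.mp hcont Dᶜ hD.isOpen_compl
  have hsub : Set.Icc 0 c ×ˢ ({x} : Set X) ⊆ V := by
    rintro ⟨s, y⟩ ⟨hs, hy⟩
    have hy' : y = x := hy
    have hmem : (s, x) ∈ (fun p : ℝ × X => φ p.1 p.2) ⁻¹' Dᶜ ∩ Set.Ici 0 ×ˢ Set.univ :=
      ⟨h s (by simpa [hy'] using hs), ⟨hs.1, trivial⟩⟩
    rw [hVeq] at hmem
    show (s, y) ∈ V
    rw [hy']
    exact hmem.1
  obtain ⟨u, v, hu, hv, hcu, hxv, huv⟩ :=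
    generalized_tube_lemma isCompact_Icc isCompact_singleton hVopen hsub
  refine ⟨v, hv, hxv rfl, fun y hy s hs => ?_⟩
  have hmem : (s, y) ∈ V ∩ Set.Ici 0 ×ˢ Set.univ := ⟨huv ⟨hcu hs, hy⟩, ⟨hs.1, trivial⟩⟩
  rw [← hVeq] at hmem
  exact hmem.1

/-- when `τ₁(x)` is finite and positive the infimum is attained: `φ_{τ₁(x)}(x) ∈ D`. -/
lemma tau1_attained_aux
    (hflow : (∀ x, φ 0 x = x) ∧ ∀ s t : ℝ, 0 ≤ s → 0 ≤ t → ∀ x, φ (s + t) x = φ s (φ t x))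
    (hcont : ContinuousOn (fun p : ℝ × X => φ p.1 p.2) (Set.Ici 0 ×ˢ Set.univ))
    (hD : IsClosed D) {x : X} (hfin : tau1 φ D x ≠ ⊤) :
    φ (tau1 φ D x).toReal x ∈ D := by
  set T' := (tau1 φ D x).toReal with hT'
  set S1 : Set ℝ := {t : ℝ | 0 < t ∧ φ t x ∈ D} with hS1
  have hTval : tau1 φ D x = ENNReal.ofReal T' := (ENNReal.ofReal_toReal hfin).symm
  have hclos : T' ∈ closure S1 := by
    rw [Metric.mem_closure_iff]
    intro ε hε
    have hlt : sInf (ENNReal.ofReal '' S1) < tau1 φ D x + ENNReal.ofReal ε := by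
      rw [show sInf (ENNReal.ofReal '' S1) = tau1 φ D x from rfl]
      exact ENNReal.lt_add_right hfin (ENNReal.ofReal_pos.mpr hε).ne'
    obtain ⟨a, ⟨s, hsS1, rfl⟩, has⟩ := sInf_lt_iff.mp hlt
    have hsub : ENNReal.ofReal s < ENNReal.ofReal (T' + ε) := by
      rw [ENNReal.ofReal_add ENNReal.toReal_nonneg hε.le, ← hTval]
      exact has
    have hslt : s < T' + ε := by
      have hpos : (0:ℝ) < T' + ε := by
        have h0 : (0:ℝ) ≤ T' := hT' ▸ ENNReal.toReal_nonneg
        linarith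
      exact (ENNReal.ofReal_lt_ofReal_iff hpos).mp hsub
    have hsge : T' ≤ s := by
      have h1 : tau1 φ D x ≤ ENNReal.ofReal s := sInf_le ⟨s, hsS1, rfl⟩
      rw [hTval] at h1
      exact (ENNReal.ofReal_le_ofReal_iff hsS1.1.le).mp h1
    exact ⟨s, hsS1, by rw [Real.dist_eq, abs_of_nonpos (by linarith)]; linarith⟩
  have hclS1 : closure S1 ⊆ Set.Ici 0 :=
    (isClosed_Ici.closure_subset_iff).mpr (fun s hs => hs.1.le)
  have hcS : ContinuousOn (fun r : ℝ => φ r x) (closure S1) :=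
    (cont_traj_aux hcont x).mono hclS1
  have : φ T' x ∈ closure ((fun r : ℝ => φ r x) '' S1) :=
    hcS.image_closure ⟨T', hclos, rfl⟩
  have himg : (fun r : ℝ => φ r x) '' S1 ⊆ D := by rintro z ⟨s, hs, rfl⟩; exact hs.2
  exact (hD.closure_subset_iff.mpr himg) this

end AuxStmt13

/-- Under `I(D) ∩ D = ∅`, `D_ξ` open and `φ_ξ(D_ξ) ⊆ X_ξ`, the function
`τ*` (equal to `τ₁` off `D` and to `0` on `D`) is continuous on `X_ξ ∪ D`. -/
theorem stmt13 {X : Type*} [MetricSpace X] [CompactSpace X]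
    (φ : ℝ → X → X) (D : Set X) (I : X → X) (ξ : ℝ) (hIDS : IsIDS φ D I)
    (hID : (I '' D) ∩ D = ∅) (hξ : 0 < ξ) (hopen : IsOpen (tube φ D ξ))
    (hmap : (fun x => φ ξ x) '' tube φ D ξ ⊆ Xtube φ D ξ) :
    ContinuousOn (tauStar φ D) (Xtube φ D ξ ∪ D) := by
  obtain ⟨hflow, hcont, hDc, -, -, hpos, -⟩ := hIDS
  intro x hx
  by_cases hxD : x ∈ D
  · -- continuity at a point of D
    have hτx : tauStar φ D x = 0 := if_pos hxD
    show Filter.Tendsto (tauStar φ D) (nhdsWithin x (Xtube φ D ξ ∪ D)) (nhds (tauStar φ D x))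
    rw [hτx]
    refine tendsto_order.2 ⟨fun b hb => absurd hb (by simp), fun b hb => ?_⟩
    obtain ⟨t, ht0, htξ, htb⟩ : ∃ t : ℝ, 0 < t ∧ t < ξ ∧ ENNReal.ofReal t < b := by
      rcases eq_or_ne b ⊤ with rfl | hbt
      · exact ⟨ξ / 2, by positivity, by linarith, ENNReal.ofReal_lt_top⟩
      · have hb' : 0 < b.toReal := ENNReal.toReal_pos hb.ne' hbt
        refine ⟨min (ξ / 2) (b.toReal / 2), by positivity,
          lt_of_le_of_lt (min_le_left _ _) (by linarith), ?_⟩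
        rw [ENNReal.ofReal_lt_iff_lt_toReal (le_min (by positivity) (by positivity)) hbt]
        exact lt_of_le_of_lt (min_le_right _ _) (by linarith)
    have hmem : φ t x ∈ tube φ D ξ := mem_tube_aux hxD ht0 htξ
    have hopen' : IsOpen ((fun y => φ t y) ⁻¹' tube φ D ξ) :=
      hopen.preimage (cont_space_aux hcont ht0)
    filter_upwards [mem_nhdsWithin_of_mem_nhds (hopen'.mem_nhds hmem), self_mem_nhdsWithin]
      with y hy hyS
    rcases hyS with hyX | hyD
    · have hy1 : y ∉ D := fun h => hyX (Set.mem_union_left _ h)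
      have hy2 : y ∉ tube φ D ξ := fun h => hyX (Set.mem_union_right _ h)
      obtain ⟨r, hr0, hrt, hrD⟩ := keyB_aux hflow hcont hDc hξ hopen hmap hy1 hy2 ht0.le hy
      have h1 : tau1 φ D y ≤ ENNReal.ofReal r := tau1_le_aux hr0 hrD
      calc tauStar φ D y = tau1 φ D y := if_neg hy1
        _ ≤ ENNReal.ofReal r := h1
        _ ≤ ENNReal.ofReal t := ENNReal.ofReal_le_ofReal hrt
        _ < b := htb
    · rw [tauStar, if_pos hyD]; exact hb
  · -- continuity at a point of X_ξ \ D
    have hxX : x ∈ Xtube φ D ξ := hx.resolve_right hxD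
    have hτx : tauStar φ D x = tau1 φ D x := if_neg hxD
    show Filter.Tendsto (tauStar φ D) (nhdsWithin x (Xtube φ D ξ ∪ D)) (nhds (tauStar φ D x))
    rw [hτx]
    refine tendsto_order.2 ⟨fun b hb => ?_, fun b hb => ?_⟩
    · -- lower semicontinuity
      obtain ⟨c, hc0, hbc, hcτ⟩ := ENNReal.lt_iff_exists_real_btwn.mp hb
      have hnoD : ∀ s ∈ Set.Icc (0:ℝ) c, φ s x ∉ D := by
        rintro s ⟨hs0, hsc⟩ hsD
        rcases eq_or_lt_of_le hs0 with h | h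
        · rw [← h, hflow.1] at hsD; exact hxD hsD
        · exact absurd (tau1_le_aux h hsD)
            (not_le.2 (lt_of_le_of_lt (ENNReal.ofReal_le_ofReal hsc) hcτ))
      obtain ⟨U, hUo, hxU, hU⟩ := lsc_nbhd_aux hcont hDc hnoD
      filter_upwards [mem_nhdsWithin_of_mem_nhds (hUo.mem_nhds hxU)] with y hyU
      have hyD : y ∉ D := fun h => hU y hyU 0 ⟨le_refl 0, hc0⟩ (by rw [hflow.1]; exact h)
      have h1 : ENNReal.ofReal c ≤ tau1 φ D y :=
        le_tau1_aux (fun s hs0 hsc => hU y hyU s ⟨hs0.le, hsc⟩)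
      rw [tauStar, if_neg hyD]
      exact lt_of_lt_of_le hbc h1
    · -- upper semicontinuity
      have hfin : tau1 φ D x ≠ ⊤ := ne_top_of_lt hb
      set T' := (tau1 φ D x).toReal with hT'
      have hT'0 : 0 < T' := ENNReal.toReal_pos (hpos x).ne' hfin
      have hTD : φ T' x ∈ D := tau1_attained_aux hflow hcont hDc hfin
      obtain ⟨c, hc0, hTc, hcb⟩ := ENNReal.lt_iff_exists_real_btwn.mp hb
      have hT'c : T' < c := by
        have h1 : ENNReal.ofReal T' < ENNReal.ofReal c := by
          rw [hT', ENNReal.ofReal_toReal hfin]; exact hTc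
        by_contra hle
        exact absurd h1 (not_lt.2 (ENNReal.ofReal_le_ofReal (not_lt.1 hle)))
      set δ := min (c - T') ξ / 2 with hδ
      have hδ0 : 0 < δ := by
        have : 0 < min (c - T') ξ := lt_min (by linarith) hξ
        rw [hδ]; linarith
      have hδξ : δ < ξ := by
        have : min (c - T') ξ ≤ ξ := min_le_right _ _
        rw [hδ]; linarith
      have hδc : T' + δ ≤ c := by
        have : min (c - T') ξ ≤ c - T' := min_le_left _ _
        rw [hδ]; linarith
      have hmem : φ (T' + δ) x ∈ tube φ D ξ := by
        rw [(by ring : T' + δ = δ + T'), hflow.2 δ T' hδ0.le hT'0.le]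
        exact mem_tube_aux hTD hδ0 hδξ
      have hopen' : IsOpen ((fun y => φ (T' + δ) y) ⁻¹' tube φ D ξ) :=
        hopen.preimage (cont_space_aux hcont (by positivity))
      filter_upwards [mem_nhdsWithin_of_mem_nhds (hopen'.mem_nhds hmem), self_mem_nhdsWithin,
        mem_nhdsWithin_of_mem_nhds (hDc.isOpen_compl.mem_nhds hxD)] with y hy1 hy2 hy3
      have hyX : y ∈ Xtube φ D ξ := hy2.resolve_right hy3
      have hz1 : y ∉ D := fun h => hyX (Set.mem_union_left _ h)
      have hz2 : y ∉ tube φ D ξ := fun h => hyX (Set.mem_union_right _ h)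
      obtain ⟨r, hr0, hrt, hrD⟩ := keyB_aux hflow hcont hDc hξ hopen hmap hz1 hz2
        (by positivity : (0:ℝ) ≤ T' + δ) hy1
      rw [tauStar, if_neg hz1]
      calc tau1 φ D y ≤ ENNReal.ofReal r := tau1_le_aux hr0 hrD
        _ ≤ ENNReal.ofReal (T' + δ) := ENNReal.ofReal_le_ofReal hrt
        _ ≤ ENNReal.ofReal c := ENNReal.ofReal_le_ofReal hδc
        _ < b := hcb
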